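/- For every (t,x) ∈ ℕ × ∂B with t ≥ 1 and every function f : ℤ^d → ℝ vanishing outside B, one has E[(N_{t,x} f)(Z^x_t)] = E[(N f)(Z^x_t)], where N_{t,x} f denotes the function on {y − s e_d : (s,y) ∈ S(t,x)} determined by the vector N_{t,x} applied to (f(z + u e_d))_{(u,z)∈S(t,x)} (and zero elsewhere). -/

import Mathlib

open Finset

/-- The `i`-th standard unit vector `e_i` in `ℤ^(d+1)`. -/
def unitVec (d : ℕ) (i : Fin (d + 1)) : Fin (d + 1) → ℤ := Pi.single i 1

/-- The ℓ¹-norm `‖v‖₁ = ∑ i, |v i|` on `ℤ^(d+1)`. -/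
def norm1 {d : ℕ} (v : Fin (d + 1) → ℤ) : ℤ := ∑ i, |v i|

/-- `P t x z` represents the `t`-step transition probability `P(Z^x_t = z)` of a
time-homogeneous Markov chain on `ℤ^(d+1)` which at each step moves by `± e_i`,
with all `2(d+1)` one-step probabilities strictly positive and summing to `1`. -/
structure IsRandomWalk (d : ℕ)
    (P : ℕ → (Fin (d + 1) → ℤ) → (Fin (d + 1) → ℤ) → ℝ) : Prop where
  nonneg : ∀ t x z, 0 ≤ P t x z
  init : ∀ x z, P 0 x z = if z = x then 1 else 0
  step : ∀ t x z, P (t + 1) x z =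
      ∑ i, P 1 x (x + unitVec d i) * P t (x + unitVec d i) z
        + ∑ i, P 1 x (x - unitVec d i) * P t (x - unitVec d i) z
  sum_one : ∀ x, (∑ i, P 1 x (x + unitVec d i)) + (∑ i, P 1 x (x - unitVec d i)) = 1
  pos_add : ∀ x i, 0 < P 1 x (x + unitVec d i)
  pos_sub : ∀ x i, 0 < P 1 x (x - unitVec d i)

/-- The expectation `E[h(Z^x_t)]` (the law of `Z^x_t` has finite support). -/
noncomputable def expect {d : ℕ} (P : ℕ → (Fin (d + 1) → ℤ) → (Fin (d + 1) → ℤ) → ℝ)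
    (t : ℕ) (x : Fin (d + 1) → ℤ) (h : (Fin (d + 1) → ℤ) → ℝ) : ℝ :=
  ∑ᶠ z, h z * P t x z

/-- The finite set `S(t,x) = {(s,y) ∈ ℕ × ∂B : 1 ≤ s ≤ t, ‖y − x‖₁ ≤ t − s,
and t − s − ‖y − x‖₁ is even}`. -/
noncomputable def Sset (d t : ℕ) (x : Fin (d + 1) → ℤ) : Finset (ℕ × (Fin (d + 1) → ℤ)) :=
  ((Finset.Icc 1 t) ×ˢ (Fintype.piFinset fun i => Finset.Icc (x i - t) (x i + t))).filter
    (fun p => p.2 (Fin.last d) = 0 ∧ norm1 (p.2 - x) ≤ (t : ℤ) - p.1 ∧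
      Even ((t : ℤ) - p.1 - norm1 (p.2 - x)))

/-- The matrix `W^+_{t,x}`, with entries `(W^+)_{(s,y),(u,z)} = P(Z^y_s = z + u e_d)`. -/
noncomputable def Wplus {d : ℕ} (P : ℕ → (Fin (d + 1) → ℤ) → (Fin (d + 1) → ℤ) → ℝ)
    (t : ℕ) (x : Fin (d + 1) → ℤ) :
    Matrix {p // p ∈ Sset d t x} {p // p ∈ Sset d t x} ℝ :=
  fun p q => P p.1.1 p.1.2 (q.1.2 + Pi.single (Fin.last d) (q.1.1 : ℤ))

/-- The matrix `W^-_{t,x}`, with entries `(W^-)_{(s,y),(u,z)} = P(Z^y_s = z - u e_d)`. -/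
noncomputable def Wminus {d : ℕ} (P : ℕ → (Fin (d + 1) → ℤ) → (Fin (d + 1) → ℤ) → ℝ)
    (t : ℕ) (x : Fin (d + 1) → ℤ) :
    Matrix {p // p ∈ Sset d t x} {p // p ∈ Sset d t x} ℝ :=
  fun p q => P p.1.1 p.1.2 (q.1.2 - Pi.single (Fin.last d) (q.1.1 : ℤ))

/-- `N_{t,x} = (W^-_{t,x})⁻¹ W^+_{t,x}`. -/
noncomputable def Nmat {d : ℕ} (P : ℕ → (Fin (d + 1) → ℤ) → (Fin (d + 1) → ℤ) → ℝ)
    (t : ℕ) (x : Fin (d + 1) → ℤ) :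
    Matrix {p // p ∈ Sset d t x} {p // p ∈ Sset d t x} ℝ :=
  (Wminus P t x)⁻¹ * Wplus P t x

/-- The extended transform `N f`, vanishing outside `{w : w_d < 0}`, defined at a point
`w = x − t e_d` (with `x ∈ ∂B`, `t ≥ 1`) as the `(t,x)`-component of `N_{t,x}` applied to
the vector `(f(z + u e_d))_{(u,z) ∈ S(t,x)}`.  (Note that `(t,x) ∈ S(t,x)` always holds
in this situation, so the guard below is satisfied exactly when `w_d < 0`.) -/
noncomputable def Ntrans {d : ℕ} (P : ℕ → (Fin (d + 1) → ℤ) → (Fin (d + 1) → ℤ) → ℝ)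
    (f : (Fin (d + 1) → ℤ) → ℝ) : (Fin (d + 1) → ℤ) → ℝ := fun w =>
  if hm : ((-(w (Fin.last d))).toNat, Function.update w (Fin.last d) 0) ∈
      Sset d (-(w (Fin.last d))).toNat (Function.update w (Fin.last d) 0) then
    (Nmat P (-(w (Fin.last d))).toNat (Function.update w (Fin.last d) 0)).mulVec
      (fun p => f (p.1.2 + Pi.single (Fin.last d) (p.1.1 : ℤ)))
      ⟨((-(w (Fin.last d))).toNat, Function.update w (Fin.last d) 0), hm⟩
  else 0

/-- The function `N_{t,x} f` on `ℤ^(d+1)`: supported on `{y − s e_d : (s,y) ∈ S(t,x)}`,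
where its value at `y − s e_d` is the `(s,y)`-component of `N_{t,x}` applied to the vector
`(f(z + u e_d))_{(u,z) ∈ S(t,x)}`; zero elsewhere. -/
noncomputable def NmatFun {d : ℕ} (P : ℕ → (Fin (d + 1) → ℤ) → (Fin (d + 1) → ℤ) → ℝ)
    (t : ℕ) (x : Fin (d + 1) → ℤ) (f : (Fin (d + 1) → ℤ) → ℝ) :
    (Fin (d + 1) → ℤ) → ℝ := fun w =>
  if hm : ((-(w (Fin.last d))).toNat, Function.update w (Fin.last d) 0) ∈ Sset d t x then
    (Nmat P t x).mulVec (fun p => f (p.1.2 + Pi.single (Fin.last d) (p.1.1 : ℤ)))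
      ⟨((-(w (Fin.last d))).toNat, Function.update w (Fin.last d) 0), hm⟩
  else 0

lemma norm1_nonneg {d : ℕ} (v : Fin (d+1) → ℤ) : 0 ≤ norm1 v :=
  Finset.sum_nonneg fun _ _ => abs_nonneg _

lemma norm1_zero {d : ℕ} : norm1 (0 : Fin (d+1) → ℤ) = 0 := by simp [norm1]

lemma abs_le_norm1 {d : ℕ} (v : Fin (d+1) → ℤ) (i : Fin (d+1)) : |v i| ≤ norm1 v :=
  Finset.single_le_sum (fun j _ => abs_nonneg (v j)) (Finset.mem_univ i)

lemma eq_zero_of_norm1_nonpos {d : ℕ} {v : Fin (d+1) → ℤ} (h : norm1 v ≤ 0) : v = 0 := by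
  funext i
  have h1 := abs_le_norm1 v i
  have := abs_nonneg (v i)
  have : |v i| = 0 := le_antisymm (h1.trans h) this
  simpa [abs_eq_zero] using this

lemma norm1_add_le {d : ℕ} (a b : Fin (d+1) → ℤ) : norm1 (a + b) ≤ norm1 a + norm1 b := by
  unfold norm1
  rw [← Finset.sum_add_distrib]
  exact Finset.sum_le_sum fun i _ => abs_add_le _ _

lemma abs_mod_two (x : ℤ) : |x| % 2 = x % 2 := by
  rcases abs_cases x with ⟨h,_⟩|⟨h,_⟩ <;> omega

lemma norm1_mod_two {d : ℕ} (v : Fin (d+1) → ℤ) : norm1 v % 2 = (∑ i, v i) % 2 := by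
  unfold norm1
  induction (Finset.univ : Finset (Fin (d+1))) using Finset.induction with
  | empty => simp
  | @insert a s h ih =>
    rw [Finset.sum_insert h, Finset.sum_insert h]
    have := abs_mod_two (v a)
    omega

lemma norm1_add_single {d : ℕ} (v : Fin (d+1) → ℤ) (i : Fin (d+1)) (c : ℤ) :
    norm1 (v + Pi.single i c) + |v i| = norm1 v + |v i + c| := by
  have h : v + Pi.single i c = Function.update v i (v i + c) := by
    funext j; by_cases hj : j = i <;> simp [hj, Pi.single_apply, Function.update_apply]
  rw [h]
  unfold norm1
  rw [← Finset.add_sum_erase _ (fun j => |Function.update v i (v i + c) j|) (Finset.mem_univ i),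
      ← Finset.add_sum_erase _ (fun j => |v j|) (Finset.mem_univ i)]
  have : ∀ x ∈ Finset.univ.erase i, |Function.update v i (v i + c) x| = |v x| := by
    intro x hx
    rw [Function.update_apply, if_neg (Finset.ne_of_mem_erase hx)]
  rw [Finset.sum_congr rfl this]
  simp [Function.update_self, add_comm c]
  ring

/-- support of the walk -/
lemma P_support {d : ℕ} {P : ℕ → (Fin (d + 1) → ℤ) → (Fin (d + 1) → ℤ) → ℝ}
    (hP : IsRandomWalk d P) :
    ∀ (s : ℕ) (y w : Fin (d+1) → ℤ), P s y w ≠ 0 →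
      norm1 (w - y) ≤ (s : ℤ) ∧ norm1 (w - y) % 2 = (s : ℤ) % 2 := by
  intro s
  induction s with
  | zero =>
    intro y w h
    rw [hP.init] at h
    have : w = y := by by_contra hc; simp [hc] at h
    simp [this, norm1_zero]
  | succ n ih =>
    intro y w h
    rw [hP.step] at h
    have key : ∃ (i : Fin (d+1)) (c : ℤ), (c = 1 ∨ c = -1) ∧
        P n (y + (Pi.single i c : Fin (d+1) → ℤ)) w ≠ 0 := by
      rcases (by by_contra hc; push_neg at hc; 
                 exact h (by rw [hc.1, hc.2]; ring) :
          (∑ i, P 1 y (y + unitVec d i) * P n (y + unitVec d i) w) ≠ 0 ∨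
          (∑ i, P 1 y (y - unitVec d i) * P n (y - unitVec d i) w) ≠ 0) with h1 | h1
      · obtain ⟨i, _, hi⟩ := Finset.exists_ne_zero_of_sum_ne_zero h1
        refine ⟨i, 1, Or.inl rfl, fun hc => hi ?_⟩
        have : y + (Pi.single i (1:ℤ) : Fin (d+1) → ℤ) = y + unitVec d i := rfl
        rw [this] at hc; rw [hc]; ring
      · obtain ⟨i, _, hi⟩ := Finset.exists_ne_zero_of_sum_ne_zero h1
        refine ⟨i, -1, Or.inr rfl, fun hc => hi ?_⟩
        have : y + (Pi.single i (-1:ℤ) : Fin (d+1) → ℤ) = y - unitVec d i := by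
          funext j; simp [unitVec, Pi.single_apply]; by_cases hj : j = i <;> simp [hj] <;> omega
        rw [this] at hc; rw [hc]; ring
    obtain ⟨i, c, hc, hne⟩ := key
    have hih := ih _ w hne
    have heq : w - (y + (Pi.single i c : Fin (d+1) → ℤ)) = (w - y) + Pi.single i (-c) := by
      funext j; simp [Pi.single_apply]; by_cases hj : j = i <;> simp [hj] <;> ring
    rw [heq] at hih
    set a := w - y with ha
    clear_value a
    have hkey := norm1_add_single a i (-c)
    have h1 : |a i + -c| % 2 = (a i + -c) % 2 := abs_mod_two _
    have h2 : |a i| % 2 = (a i) % 2 := abs_mod_two _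
    have h3 : |a i + -c| ≤ |a i| + 1 := by
      calc |a i + -c| ≤ |a i| + |(-c)| := abs_add_le _ _
        _ ≤ |a i| + 1 := by rcases hc with h|h <;> simp [h]
    have h4 : |a i| ≤ |a i + -c| + 1 := by
      have h5 : |(a i + -c) + c| ≤ |a i + -c| + |c| := abs_add_le _ _
      have h6 : (a i + -c) + c = a i := by ring
      have h7 : |c| = 1 := by rcases hc with h|h <;> simp [h]
      rw [h6, h7] at h5; exact h5
    obtain ⟨hle, hmod⟩ := hih
    push_cast
    revert hkey h1 h2 h3 h4 hle hmod
    generalize norm1 (a + Pi.single i (-c)) = n1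
    generalize norm1 a = NA
    generalize h5 : a i + -c = s
    revert h5
    generalize a i = ai
    generalize |s| = B
    generalize |ai| = A
    intros
    rcases hc with rfl|rfl <;> omega


lemma P_pos_down {d : ℕ} {P : ℕ → (Fin (d + 1) → ℤ) → (Fin (d + 1) → ℤ) → ℝ}
    (hP : IsRandomWalk d P) :
    ∀ (s : ℕ) (y : Fin (d+1) → ℤ), 0 < P s y (y - Pi.single (Fin.last d) (s:ℤ)) := by
  intro s
  induction s with
  | zero => intro y; simp [hP.init]
  | succ n ih =>
    intro y
    have key : y - Pi.single (Fin.last d) ((n+1:ℕ):ℤ)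
        = (y - unitVec d (Fin.last d)) - Pi.single (Fin.last d) ((n:ℕ):ℤ) := by
      funext j
      by_cases hj : j = Fin.last d <;> simp [hj, unitVec, Pi.single_apply] <;> push_cast <;> ring
    have hterm : 0 < P 1 y (y - unitVec d (Fin.last d)) *
        P n (y - unitVec d (Fin.last d)) (y - Pi.single (Fin.last d) ((n+1:ℕ):ℤ)) := by
      refine mul_pos (hP.pos_sub _ _) ?_
      rw [key]; exact ih _
    rw [hP.step]
    have h1 : (0:ℝ) ≤ ∑ i, P 1 y (y + unitVec d i) *
        P n (y + unitVec d i) (y - Pi.single (Fin.last d) ((n+1:ℕ):ℤ)) :=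
      Finset.sum_nonneg fun i _ => mul_nonneg (hP.nonneg _ _ _) (hP.nonneg _ _ _)
    have h2 : P 1 y (y - unitVec d (Fin.last d)) *
        P n (y - unitVec d (Fin.last d)) (y - Pi.single (Fin.last d) ((n+1:ℕ):ℤ))
        ≤ ∑ i, P 1 y (y - unitVec d i) *
          P n (y - unitVec d i) (y - Pi.single (Fin.last d) ((n+1:ℕ):ℤ)) :=
      Finset.single_le_sum
        (f := fun i => P 1 y (y - unitVec d i) *
          P n (y - unitVec d i) (y - Pi.single (Fin.last d) ((n+1:ℕ):ℤ)))
        (fun i _ => mul_nonneg (hP.nonneg _ _ _) (hP.nonneg _ _ _))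
        (Finset.mem_univ (Fin.last d))
    linarith

/-- The order relation on index pairs. -/
def rr {d : ℕ} (q p : ℕ × (Fin (d+1) → ℤ)) : Prop :=
  (q.1:ℤ) ≤ p.1 ∧ norm1 (q.2 - p.2) ≤ (p.1:ℤ) - q.1 ∧
    norm1 (q.2 - p.2) % 2 = ((p.1:ℤ) - q.1) % 2

lemma rr_refl {d : ℕ} (p : ℕ × (Fin (d+1) → ℤ)) : rr p p := by
  refine ⟨le_refl _, ?_, ?_⟩ <;> simp [norm1]

lemma rr_trans {d : ℕ} {a b c : ℕ × (Fin (d+1) → ℤ)} (h1 : rr a b) (h2 : rr b c) : rr a c := by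
  obtain ⟨e1, e2, e3⟩ := h1
  obtain ⟨f1, f2, f3⟩ := h2
  have htri : norm1 (a.2 - c.2) ≤ norm1 (a.2 - b.2) + norm1 (b.2 - c.2) := by
    have : a.2 - c.2 = (a.2 - b.2) + (b.2 - c.2) := by ring
    rw [this]; exact norm1_add_le _ _
  have hpar : norm1 (a.2 - c.2) % 2 = (norm1 (a.2 - b.2) + norm1 (b.2 - c.2)) % 2 := by
    have g1 := norm1_mod_two (a.2 - c.2)
    have g2 := norm1_mod_two (a.2 - b.2)
    have g3 := norm1_mod_two (b.2 - c.2)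
    have hsum : (∑ i, (a.2 - c.2) i) = (∑ i, (a.2 - b.2) i) + (∑ i, (b.2 - c.2) i) := by
      rw [← Finset.sum_add_distrib]
      exact Finset.sum_congr rfl fun i _ => by simp
    omega
  exact ⟨by omega, by omega, by omega⟩

lemma mem_Sset_iff {d t : ℕ} {x : Fin (d+1) → ℤ} {u : ℕ} {z : Fin (d+1) → ℤ} :
    (u, z) ∈ Sset d t x ↔ 1 ≤ u ∧ z (Fin.last d) = 0 ∧ rr (u, z) (t, x) := by
  simp only [Sset, Finset.mem_filter, Finset.mem_product, Finset.mem_Icc,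
    Fintype.mem_piFinset, rr, Int.even_iff]
  constructor
  · rintro ⟨⟨hu, _⟩, h2, h3, h4⟩
    exact ⟨hu.1, h2, by omega, h3, by omega⟩
  · rintro ⟨h1, h2, h3, h4, h5⟩
    have hn := norm1_nonneg (z - x)
    refine ⟨⟨⟨h1, by omega⟩, fun i => ?_⟩, h2, h4, by omega⟩
    have hab : |z i - x i| ≤ norm1 (z - x) := by simpa using abs_le_norm1 (z - x) i
    have h6 := abs_le.mp (hab.trans (by omega : norm1 (z - x) ≤ (t:ℤ)))
    omega

lemma P_entry_rr {d : ℕ} {P : ℕ → (Fin (d + 1) → ℤ) → (Fin (d + 1) → ℤ) → ℝ}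
    (hP : IsRandomWalk d P) {s u : ℕ} {y z : Fin (d+1) → ℤ}
    (hy : y (Fin.last d) = 0) (hz : z (Fin.last d) = 0)
    (c : ℤ) (hc : |c| = (u:ℤ)) (h : P s y (z + Pi.single (Fin.last d) c) ≠ 0) :
    rr (u, z) (s, y) := by
  obtain ⟨h1, h2⟩ := P_support hP s y _ h
  have heq : (z + Pi.single (Fin.last d) c) - y = (z - y) + Pi.single (Fin.last d) c := by
    funext j; simp; ring
  rw [heq] at h1 h2
  have hkey := norm1_add_single (z - y) (Fin.last d) c
  have hzy : (z - y) (Fin.last d) = 0 := by simp [hy, hz]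
  rw [hzy] at hkey
  simp only [abs_zero, add_zero, zero_add, hc] at hkey
  have hn := norm1_nonneg (z - y)
  refine ⟨?_, ?_, ?_⟩ <;> simp only [] <;> omega

lemma Wminus_rr {d : ℕ} {P : ℕ → (Fin (d + 1) → ℤ) → (Fin (d + 1) → ℤ) → ℝ}
    (hP : IsRandomWalk d P) {t : ℕ} {x : Fin (d+1) → ℤ}
    (p q : {p // p ∈ Sset d t x}) (h : ¬ rr q.1 p.1) : Wminus P t x p q = 0 := by
  by_contra h0
  obtain ⟨hp1, hpy, _⟩ := mem_Sset_iff.mp (show (p.1.1, p.1.2) ∈ Sset d t x from p.2)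
  obtain ⟨hq1, hqz, _⟩ := mem_Sset_iff.mp (show (q.1.1, q.1.2) ∈ Sset d t x from q.2)
  apply h
  have heq : q.1.2 - Pi.single (Fin.last d) (q.1.1:ℤ)
      = q.1.2 + Pi.single (Fin.last d) (-(q.1.1:ℤ)) := by
    funext j; simp [Pi.single_apply]; by_cases hj : j = Fin.last d <;> simp [hj] <;> ring
  have := P_entry_rr hP (u := q.1.1) hpy hqz (-(q.1.1:ℤ)) (by simp) (by rw [← heq]; exact h0)
  exact this

lemma Wplus_rr {d : ℕ} {P : ℕ → (Fin (d + 1) → ℤ) → (Fin (d + 1) → ℤ) → ℝ}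
    (hP : IsRandomWalk d P) {t : ℕ} {x : Fin (d+1) → ℤ}
    (p q : {p // p ∈ Sset d t x}) (h : ¬ rr q.1 p.1) : Wplus P t x p q = 0 := by
  by_contra h0
  obtain ⟨hp1, hpy, _⟩ := mem_Sset_iff.mp (show (p.1.1, p.1.2) ∈ Sset d t x from p.2)
  obtain ⟨hq1, hqz, _⟩ := mem_Sset_iff.mp (show (q.1.1, q.1.2) ∈ Sset d t x from q.2)
  exact h (P_entry_rr hP (u := q.1.1) hpy hqz ((q.1.1:ℤ)) (by simp) h0)

/-- rr is antisymmetric-on-pairs in the relevant sense -/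
lemma rr_eq_or_lt {d : ℕ} {a b : ℕ × (Fin (d+1) → ℤ)} (h : rr a b) :
    a = b ∨ a.1 < b.1 := by
  obtain ⟨h1, h2, _⟩ := h
  rcases eq_or_lt_of_le h1 with he | hl
  · left
    have hu : a.1 = b.1 := by omega
    have : norm1 (a.2 - b.2) ≤ 0 := by omega
    have h3 := eq_zero_of_norm1_nonpos this
    have : a.2 = b.2 := by
      funext j; have := congrFun h3 j; simp at this; linarith
    exact Prod.ext hu this
  · right; omega

/-- The subalgebra of matrices with the `rr` zero pattern. -/
def patS (d t : ℕ) (x : Fin (d+1) → ℤ)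
    (P : ℕ → (Fin (d + 1) → ℤ) → (Fin (d + 1) → ℤ) → ℝ) :
    Subalgebra ℝ (Matrix {p // p ∈ Sset d t x} {p // p ∈ Sset d t x} ℝ) where
  carrier := {M | ∀ p q, ¬ rr q.1 p.1 → M p q = 0}
  add_mem' := by
    intro A B hA hB p q h
    simp only [Matrix.add_apply, hA p q h, hB p q h, add_zero]
  zero_mem' := by intro p q h; simp
  mul_mem' := by
    intro A B hA hB p q h
    show (A * B) p q = 0
    rw [Matrix.mul_apply]
    refine Finset.sum_eq_zero fun k _ => ?_
    by_cases hk : rr k.1 p.1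
    · have : ¬ rr q.1 k.1 := fun hq => h (rr_trans hq hk)
      rw [hB k q this, mul_zero]
    · rw [hA p k hk, zero_mul]
  one_mem' := by
    intro p q h
    have hne : q ≠ p := fun e => h (e ▸ rr_refl q.1)
    exact Matrix.one_apply_ne' hne
  algebraMap_mem' := by
    intro r p q h
    have hne : p ≠ q := fun e => h (e ▸ rr_refl q.1)
    rw [Matrix.algebraMap_matrix_apply, if_neg hne]

set_option synthInstance.maxHeartbeats 1000000 in
set_option maxHeartbeats 1000000 in
lemma inv_mem_patS {d t : ℕ} {x : Fin (d+1) → ℤ}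
    {P : ℕ → (Fin (d + 1) → ℤ) → (Fin (d + 1) → ℤ) → ℝ}
    {A : Matrix {p // p ∈ Sset d t x} {p // p ∈ Sset d t x} ℝ}
    (hA : A ∈ patS d t x P) (hdet : IsUnit A.det) : A⁻¹ ∈ patS d t x P := by
  classical
  set S := patS d t x P
  let a : S := ⟨A, hA⟩
  have hinj : Function.Injective (LinearMap.mulLeft ℝ a) := by
    intro u v huv
    have h1 : A * (u : Matrix _ _ ℝ) = A * (v : Matrix _ _ ℝ) := congrArg Subtype.val huv
    have h2 := congrArg (fun M => A⁻¹ * M) h1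
    simp only [← Matrix.mul_assoc, Matrix.nonsing_inv_mul A hdet, Matrix.one_mul] at h2
    exact Subtype.ext h2
  have hsurj := (LinearMap.injective_iff_surjective).mp hinj
  obtain ⟨X, hX⟩ := hsurj 1
  have hX' : A * (X : Matrix _ _ ℝ) = 1 := by
    have := congrArg Subtype.val hX
    simpa using this
  rw [Matrix.inv_eq_right_inv hX']
  exact X.2

lemma Wminus_isUnit_det {d : ℕ} {P : ℕ → (Fin (d + 1) → ℤ) → (Fin (d + 1) → ℤ) → ℝ}
    (hP : IsRandomWalk d P) (t : ℕ) (x : Fin (d+1) → ℤ) :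
    IsUnit (Wminus P t x).det := by
  classical
  have hdiag : ∀ p : {p // p ∈ Sset d t x}, 0 < Wminus P t x p p := by
    intro p
    exact P_pos_down hP p.1.1 p.1.2
  let b : {p // p ∈ Sset d t x} → Lex (ℤ × Fin (Fintype.card {p // p ∈ Sset d t x})) :=
    fun p => toLex (-(p.1.1:ℤ), Fintype.equivFin _ p)
  have hbinj : Function.Injective b := by
    intro p q h
    have h2 := congrArg ofLex h
    have := congrArg Prod.snd h2
    exact (Fintype.equivFin _).injective this
  letI instLO : LinearOrder {p // p ∈ Sset d t x} := LinearOrder.lift' b hbinj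
  have hlt : ∀ u v : {p // p ∈ Sset d t x},
      @LT.lt _ (@Preorder.toLT _ (@PartialOrder.toPreorder _
        (@LinearOrder.toPartialOrder _ instLO))) u v ↔ b u < b v := fun u v => Iff.rfl
  have hdet2 : (Wminus P t x).det = ∏ i, Wminus P t x i i := by
    apply Matrix.det_of_upperTriangular
    intro i j hij
    by_contra h0
    have hrr : rr j.1 i.1 := by
      by_contra hr
      exact h0 (Wminus_rr hP i j hr)
    rcases rr_eq_or_lt hrr with he | hlt2
    · have hji : j = i := Subtype.ext he
      subst hji
      exact absurd ((hlt j j).mp hij) (lt_irrefl _)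
    · have hbi : b i < b j := by
        have hzz : -(i.1.1:ℤ) < -(j.1.1:ℤ) := by push_cast; omega
        exact Prod.Lex.left _ _ hzz
      exact absurd hbi (lt_asymm ((hlt j i).mp hij))
  rw [hdet2]
  exact isUnit_iff_ne_zero.mpr (ne_of_gt (Finset.prod_pos fun p _ => hdiag p))

lemma Nmat_mem_patS {d : ℕ} {P : ℕ → (Fin (d + 1) → ℤ) → (Fin (d + 1) → ℤ) → ℝ}
    (hP : IsRandomWalk d P) (t : ℕ) (x : Fin (d+1) → ℤ) :
    Nmat P t x ∈ patS d t x P := by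
  exact (patS d t x P).mul_mem
    (inv_mem_patS (fun p q h => Wminus_rr hP p q h) (Wminus_isUnit_det hP t x))
    (fun p q h => Wplus_rr hP p q h)


lemma rr_of_mem {d t : ℕ} {x : Fin (d+1) → ℤ} {q : ℕ × (Fin (d+1) → ℤ)}
    (h : q ∈ Sset d t x) : 1 ≤ q.1 ∧ q.2 (Fin.last d) = 0 ∧ rr q (t, x) := by
  have := mem_Sset_iff.mp (show (q.1, q.2) ∈ Sset d t x from h)
  exact this

set_option maxHeartbeats 1000000 in
lemma Nmat_consistent {d : ℕ} {P : ℕ → (Fin (d + 1) → ℤ) → (Fin (d + 1) → ℤ) → ℝ}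
    (hP : IsRandomWalk d P) {t s : ℕ} {x y : Fin (d+1) → ℤ}
    (hmem : (s, y) ∈ Sset d t x) (hself : (s, y) ∈ Sset d s y)
    (v : ℕ × (Fin (d+1) → ℤ) → ℝ) :
    (Nmat P t x).mulVec (fun p => v p.1) ⟨(s,y), hmem⟩
      = (Nmat P s y).mulVec (fun p => v p.1) ⟨(s,y), hself⟩ := by
  classical
  obtain ⟨hs1, hy, hrxy⟩ := mem_Sset_iff.mp hmem
  have hsub : ∀ q : ℕ × (Fin (d+1) → ℤ), q ∈ Sset d s y → q ∈ Sset d t x := by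
    intro q hq
    obtain ⟨h1, h2, h3⟩ := rr_of_mem hq
    exact mem_Sset_iff.mpr ⟨h1, h2, rr_trans h3 hrxy⟩
  let ι : {q // q ∈ Sset d s y} → {p // p ∈ Sset d t x} := fun q => ⟨q.1, hsub q.1 q.2⟩
  have hιinj : Function.Injective ι := by
    intro a b h
    apply Subtype.ext
    have h2 := congrArg Subtype.val h
    simpa [ι] using h2
  have hrange : ∀ q : {p // p ∈ Sset d t x}, rr q.1 (s, y) → q.1 ∈ Sset d s y := by
    intro q hq
    obtain ⟨h1, h2, _⟩ := rr_of_mem q.2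
    exact mem_Sset_iff.mpr ⟨h1, h2, hq⟩
  have hNpat := Nmat_mem_patS hP t x
  have hAN : Wminus P t x * Nmat P t x = Wplus P t x := by
    show Wminus P t x * ((Wminus P t x)⁻¹ * Wplus P t x) = Wplus P t x
    rw [← Matrix.mul_assoc, Matrix.mul_nonsing_inv _ (Wminus_isUnit_det hP t x),
      Matrix.one_mul]
  have hext : ∀ (F : {p // p ∈ Sset d t x} → ℝ), (∀ q, q.1 ∉ Sset d s y → F q = 0) →
      ∑ q, F q = ∑ b : {q // q ∈ Sset d s y}, F (ι b) := by
    intro F hF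
    rw [show ∑ b : {q // q ∈ Sset d s y}, F (ι b) = ∑ q ∈ Finset.univ.image ι, F q from
      (Finset.sum_image fun a _ b _ h => hιinj h).symm]
    refine (Finset.sum_subset (Finset.subset_univ _) ?_).symm
    intro q _ hq
    refine hF q fun hmem' => hq ?_
    exact Finset.mem_image.mpr ⟨⟨q.1, hmem'⟩, Finset.mem_univ _, Subtype.ext rfl⟩
  have hM : ∀ a c : {q // q ∈ Sset d s y},
      Nmat P s y a c = Nmat P t x (ι a) (ι c) := by
    have hAM : Wminus P s y * (Matrix.of fun a c => Nmat P t x (ι a) (ι c)) = Wplus P s y := by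
      ext a c
      rw [Matrix.mul_apply]
      have hrra : rr a.1 (s, y) := (rr_of_mem a.2).2.2
      calc ∑ b, Wminus P s y a b * (Matrix.of fun a c => Nmat P t x (ι a) (ι c)) b c
          = ∑ b : {q // q ∈ Sset d s y},
              Wminus P t x (ι a) (ι b) * Nmat P t x (ι b) (ι c) := rfl
        _ = ∑ q, Wminus P t x (ι a) q * Nmat P t x q (ι c) := by
            refine (hext (fun q => Wminus P t x (ι a) q * Nmat P t x q (ι c)) ?_).symm
            intro q hq
            have hnr : ¬ rr q.1 (ι a).1 := fun hr => hq (hrange q (rr_trans hr hrra))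
            show Wminus P t x (ι a) q * Nmat P t x q (ι c) = 0
            rw [Wminus_rr hP _ _ hnr, zero_mul]
        _ = (Wminus P t x * Nmat P t x) (ι a) (ι c) := (Matrix.mul_apply).symm
        _ = Wplus P t x (ι a) (ι c) := by rw [hAN]
        _ = Wplus P s y a c := rfl
    intro a c
    have hthis : (Matrix.of fun a c => Nmat P t x (ι a) (ι c)) = Nmat P s y := by
      have hdet' := Wminus_isUnit_det hP s y
      calc (Matrix.of fun a c => Nmat P t x (ι a) (ι c))
          = (Wminus P s y)⁻¹ * (Wminus P s y * (Matrix.of fun a c => Nmat P t x (ι a) (ι c))) := by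
            rw [← Matrix.mul_assoc, Matrix.nonsing_inv_mul _ hdet', Matrix.one_mul]
        _ = (Wminus P s y)⁻¹ * Wplus P s y := by rw [hAM]
        _ = Nmat P s y := rfl
    rw [← hthis]
    rfl
  have hps : ι ⟨(s,y), hself⟩ = ⟨(s,y), hmem⟩ := Subtype.ext rfl
  show ∑ q, Nmat P t x ⟨(s,y), hmem⟩ q * v q.1
    = ∑ b, Nmat P s y ⟨(s,y), hself⟩ b * v b.1
  calc ∑ q, Nmat P t x ⟨(s,y), hmem⟩ q * v q.1
      = ∑ b : {q // q ∈ Sset d s y}, Nmat P t x ⟨(s,y), hmem⟩ (ι b) * v (ι b).1 := by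
        refine hext (fun q => Nmat P t x ⟨(s,y), hmem⟩ q * v q.1) ?_
        intro q hq
        have hnr : ¬ rr q.1 (s, y) := fun hr => hq (hrange q hr)
        show Nmat P t x ⟨(s,y), hmem⟩ q * v q.1 = 0
        rw [hNpat _ q hnr, zero_mul]
    _ = ∑ b, Nmat P s y ⟨(s,y), hself⟩ b * v b.1 := by
        refine Finset.sum_congr rfl fun b _ => ?_
        rw [← hps, ← hM]


/-- `E[(N_{t,x} f)(Z^x_t)] = E[(N f)(Z^x_t)]`. -/
theorem stmt_14 (d : ℕ) (P : ℕ → (Fin (d + 1) → ℤ) → (Fin (d + 1) → ℤ) → ℝ)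
    (hP : IsRandomWalk d P) (t : ℕ) (ht : 1 ≤ t)
    (x : Fin (d + 1) → ℤ) (hx : x (Fin.last d) = 0)
    (f : (Fin (d + 1) → ℤ) → ℝ) (hf : ∀ z, z (Fin.last d) ≤ 0 → f z = 0) :
    expect P t x (NmatFun P t x f) = expect P t x (Ntrans P f) := by
  unfold _root_.expect
  refine finsum_congr fun w => ?_
  rcases eq_or_ne (P t x w) 0 with h0 | h0
  · rw [h0, mul_zero, mul_zero]
  have hcongr : NmatFun P t x f w = Ntrans P f w := by
    unfold NmatFun Ntrans
    by_cases hc : w (Fin.last d) < 0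
    · have hs1 : 1 ≤ (-(w (Fin.last d))).toNat := by omega
      have hy : Function.update w (Fin.last d) 0 (Fin.last d) = 0 :=
        Function.update_self _ _ _
      obtain ⟨hb, hpar⟩ := P_support hP t x w h0
      have hyx : (Function.update w (Fin.last d) 0 - x) (Fin.last d) = 0 := by
        simp [hy, hx]
      have hwx : w - x = (Function.update w (Fin.last d) 0 - x)
          + Pi.single (Fin.last d) (w (Fin.last d)) := by
        funext j
        by_cases hj : j = Fin.last d <;>
          simp [hj, Function.update_apply, Pi.single_apply] <;> ring
      have hkey := norm1_add_single (Function.update w (Fin.last d) 0 - x)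
        (Fin.last d) (w (Fin.last d))
      rw [hyx] at hkey
      simp only [abs_zero, add_zero, zero_add] at hkey
      rw [hwx] at hb hpar
      have habs : |w (Fin.last d)| = -(w (Fin.last d)) := abs_of_neg hc
      have htn : ((-(w (Fin.last d))).toNat : ℤ) = -(w (Fin.last d)) :=
        Int.toNat_of_nonneg (by omega)
      have hn0 := norm1_nonneg (Function.update w (Fin.last d) 0 - x)
      have hmem : ((-(w (Fin.last d))).toNat, Function.update w (Fin.last d) 0)
          ∈ Sset d t x := by
        refine mem_Sset_iff.mpr ⟨hs1, hy, ?_, ?_, ?_⟩ <;> simp only [] <;> omega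
      have hself : ((-(w (Fin.last d))).toNat, Function.update w (Fin.last d) 0)
          ∈ Sset d (-(w (Fin.last d))).toNat (Function.update w (Fin.last d) 0) :=
        mem_Sset_iff.mpr ⟨hs1, hy, rr_refl _⟩
      rw [dif_pos hmem, dif_pos hself]
      exact Nmat_consistent hP hmem hself
        (fun pr => f (pr.2 + Pi.single (Fin.last d) (pr.1 : ℤ)))
    · have h1 : (-(w (Fin.last d))).toNat = 0 := by omega
      have hg1 : ¬ (((-(w (Fin.last d))).toNat, Function.update w (Fin.last d) 0)
          ∈ Sset d t x) := fun hm => by have := (mem_Sset_iff.mp hm).1; omega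
      have hg2 : ¬ (((-(w (Fin.last d))).toNat, Function.update w (Fin.last d) 0)
          ∈ Sset d (-(w (Fin.last d))).toNat (Function.update w (Fin.last d) 0)) :=
        fun hm => by have := (mem_Sset_iff.mp hm).1; omega
      rw [dif_neg hg1, dif_neg hg2]
  rw [hcongr]
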